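/- Let s ≥ 1 and N = (s+1)(s+2)/2, let c ∈ ℝ^s have all entries nonzero, and let h₁,…,h_K ∈ ℝ[z₁,…,z_s] with each h_k of the form h_k(z) = z_{a_k} z_{b_k} − c_{a_k} c_{b_k} for indices a_k, b_k ∈ {0,1,…,s} (with the convention z₀ := 1 and c₀ := 1). Suppose that for each i ∈ {1,…,s} there exist polynomials λ^{(i)}₁,…,λ^{(i)}_K of total degree at most 1 with z_i − c_i = Σ_{k=1}^K λ^{(i)}_k h_k. Then for every r ∈ {2,…,N} there exist a positive semidefinite matrix Q^r ∈ ℝ^{N×N} with [Q^r]ᵣᵣ = 1 and [Q^r]_{pq} = 0 whenever p ∉ {1, r} or q ∉ {1, r}, and a positive semidefinite matrix U^r ∈ ℝ^{KN×KN}, such that for all z ∈ ℝ^s: u₂(z)ᵀ Q^r u₂(z) = (h(z) ⊗ u₂(z))ᵀ U^r (h(z) ⊗ u₂(z)). -/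

import Mathlib

open Matrix

noncomputable section

/-- Index set for the monomials of degree at most `2` in `s` variables: pairs
`(i, j)` with `i ≤ j` in `Fin (s+1)`, where index `0` stands for the constant `1`.
Its cardinality is `N = (s+1)(s+2)/2`. -/
abbrev MonIdx (s : ℕ) := {p : Fin (s + 1) × Fin (s + 1) // p.1 ≤ p.2}

/-- The index of the constant monomial `1` (the "first" entry of `u₂`). -/
def idx1 (s : ℕ) : MonIdx s := ⟨(0, 0), le_refl _⟩

/-- Extended variable vector: `extv z 0 = 1` and `extv z (i+1) = z i`. -/
def extv {s : ℕ} (z : Fin s → ℝ) : Fin (s + 1) → ℝ := Fin.cons 1 z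

/-- `u₂ z` : the vector of all monomials of degree at most `2` in `z`;
its entry at `⟨(i, j), _⟩` is `z_i z_j` (with the convention `z_0 = 1`). -/
def u2 {s : ℕ} (z : Fin s → ℝ) : MonIdx s → ℝ := fun p => extv z p.1.1 * extv z p.1.2

/-- `E^r` : the diagonal matrix whose `(r, r)` entry is `1` and all others are `0`. -/
def Emat {s : ℕ} (r : MonIdx s) : Matrix (MonIdx s) (MonIdx s) ℝ :=
  Matrix.single r r 1

/-- `Q^r` : the symmetric matrix whose only nonzero entries are
`[Q^r]₁₁ = ((u₂ z₀)ᵣ)²`, `[Q^r]₁ᵣ = [Q^r]ᵣ₁ = -(u₂ z₀)ᵣ` and `[Q^r]ᵣᵣ = 1`. -/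
def Qmat {s : ℕ} (z₀ : Fin s → ℝ) (r : MonIdx s) : Matrix (MonIdx s) (MonIdx s) ℝ :=
  Matrix.single (idx1 s) (idx1 s) ((u2 z₀ r) ^ 2)
    + Matrix.single (idx1 s) r (-(u2 z₀ r))
    + Matrix.single r (idx1 s) (-(u2 z₀ r))
    + Matrix.single r r 1

/-- Kronecker product of two vectors: `(v ⊗ u)_{(k,t)} = v_k u_t`. -/
def kron {K N : Type*} (v : K → ℝ) (u : N → ℝ) : K × N → ℝ := fun p => v p.1 * u p.2
/-- Extended polynomial variables: `Xe 0 = 1` and `Xe (i+1) = X i`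
(the convention `z₀ := 1`). -/
def Xe {s : ℕ} : Fin (s + 1) → MvPolynomial (Fin s) ℝ := Fin.cons 1 MvPolynomial.X

/-- Extended constants: `ce c 0 = 1` and `ce c (i+1) = c i` (the convention `c₀ := 1`). -/
def ce {s : ℕ} (c : Fin s → ℝ) : Fin (s + 1) → ℝ := Fin.cons 1 c

/-! ### Auxiliary lemmas -/

lemma finsupp_le_one {σ : Type*} :
    ∀ d : σ →₀ ℕ, d.sum (fun _ e => e) ≤ 1 → d = 0 ∨ ∃ a, d = Finsupp.single a 1 := by
  intro d
  induction d using Finsupp.induction with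
  | zero => exact fun _ => Or.inl rfl
  | single_add a n f haf hn ih =>
    intro hd
    rw [Finsupp.sum_add_index' (fun _ => rfl) (fun _ _ _ => rfl),
      Finsupp.sum_single_index rfl] at hd
    have hf0 : f = 0 := by
      rcases ih (by omega) with h0 | ⟨b, hb⟩
      · exact h0
      · exfalso
        have : f.sum (fun _ e => e) = 1 := by rw [hb, Finsupp.sum_single_index rfl]
        omega
    have hn1 : n = 1 := by
      subst hf0
      simp [Finsupp.sum_zero_index] at hd
      omega
    subst hf0 hn1
    exact Or.inr ⟨a, by simp⟩

lemma finsupp_le_two {σ : Type*} :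
    ∀ d : σ →₀ ℕ, d.sum (fun _ e => e) ≤ 2 →
      d = 0 ∨ (∃ a, d = Finsupp.single a 1) ∨
        ∃ a b, d = Finsupp.single a 1 + Finsupp.single b 1 := by
  intro d
  induction d using Finsupp.induction with
  | zero => exact fun _ => Or.inl rfl
  | single_add a n f haf hn ih =>
    intro hd
    rw [Finsupp.sum_add_index' (fun _ => rfl) (fun _ _ _ => rfl),
      Finsupp.sum_single_index rfl] at hd
    rcases finsupp_le_one f (by omega) with rfl | ⟨b, rfl⟩
    · have : n = 1 ∨ n = 2 := by
        simp [Finsupp.sum_zero_index] at hd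
        omega
      rcases this with rfl | rfl
      · exact Or.inr (Or.inl ⟨a, by simp⟩)
      · refine Or.inr (Or.inr ⟨a, a, ?_⟩)
        rw [← Finsupp.single_add]
        simp
    · have hb1 : (Finsupp.single b 1 : σ →₀ ℕ).sum (fun _ e => e) = 1 :=
        Finsupp.sum_single_index rfl
      have : n = 1 := by omega
      subst this
      exact Or.inr (Or.inr ⟨a, b, rfl⟩)

lemma prod_rep_aux {s : ℕ} (d : Fin s →₀ ℕ) (hd : d.sum (fun _ e => e) ≤ 2) :
    ∃ i j : Fin (s + 1), ∀ z : Fin s → ℝ,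
      (d.prod fun a e => z a ^ e) = extv z i * extv z j := by
  rcases finsupp_le_two d hd with rfl | ⟨a, rfl⟩ | ⟨a, b, rfl⟩
  · exact ⟨0, 0, fun z => by simp [extv]⟩
  · refine ⟨0, a.succ, fun z => ?_⟩
    rw [Finsupp.prod_single_index (by simp)]
    simp [extv]
  · refine ⟨a.succ, b.succ, fun z => ?_⟩
    rw [Finsupp.prod_add_index' (fun _ => pow_zero _) (fun _ _ _ => pow_add _ _ _),
      Finsupp.prod_single_index (by simp), Finsupp.prod_single_index (by simp)]
    simp [extv]

def RepQ {s : ℕ} (f : (Fin s → ℝ) → ℝ) : Prop :=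
  ∃ w : MonIdx s → ℝ, ∀ z, f z = ∑ t, w t * u2 z t

lemma RepQ.zero {s : ℕ} : RepQ (s := s) (fun _ => 0) := ⟨0, fun z => by simp⟩

lemma RepQ.add {s : ℕ} {f g : (Fin s → ℝ) → ℝ} (hf : RepQ f) (hg : RepQ g) :
    RepQ (fun z => f z + g z) := by
  obtain ⟨w, hw⟩ := hf; obtain ⟨v, hv⟩ := hg
  exact ⟨w + v, fun z => by simp [hw, hv, add_mul, Finset.sum_add_distrib]⟩

lemma rep_single {s : ℕ} (r : MonIdx s) (v : ℝ) : RepQ (fun z => v * u2 z r) := by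
  refine ⟨fun t => if t = r then v else 0, fun z => ?_⟩
  rw [Finset.sum_eq_single r]
  · simp
  · intro t _ ht; simp [ht]
  · simp

lemma rep_extv {s : ℕ} (v : ℝ) (i j : Fin (s + 1)) :
    RepQ (fun z => v * (extv z i * extv z j)) := by
  rcases le_total i j with hij | hij
  · exact rep_single ⟨(i, j), hij⟩ v
  · have := rep_single (s := s) ⟨(j, i), hij⟩ v
    simpa [u2, mul_comm] using this

lemma rep_finsetSum {s : ℕ} {ι : Type*} (S : Finset ι) (f : ι → (Fin s → ℝ) → ℝ)
    (hf : ∀ i ∈ S, RepQ (f i)) : RepQ (fun z => ∑ i ∈ S, f i z) := by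
  classical
  induction S using Finset.induction with
  | empty => simpa using RepQ.zero
  | @insert a S ha ih =>
    have h1 := hf a (Finset.mem_insert_self a S)
    have h2 := ih fun i hi => hf i (Finset.mem_insert_of_mem hi)
    have := RepQ.add h1 h2
    simpa [Finset.sum_insert ha] using this

lemma rep_poly {s : ℕ} (p : MvPolynomial (Fin s) ℝ) (hp : p.totalDegree ≤ 2) :
    RepQ (fun z => MvPolynomial.eval z p) := by
  have hev : ∀ z : Fin s → ℝ, MvPolynomial.eval z p
      = ∑ d ∈ p.support, p.coeff d * d.prod (fun a e => z a ^ e) := fun z =>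
    MvPolynomial.eval_eq z p
  simp only [hev]
  apply rep_finsetSum
  intro d hd
  obtain ⟨i, j, hij⟩ := prod_rep_aux d (le_trans (MvPolynomial.le_totalDegree hd) hp)
  simp only [hij]
  exact rep_extv (p.coeff d) i j

lemma dot_vecMulVec {n : Type*} [Fintype n] (v x : n → ℝ) :
    x ⬝ᵥ (Matrix.vecMulVec v v *ᵥ x) = (∑ i, v i * x i) ^ 2 := by
  rw [sq]
  simp only [Matrix.mulVec, Matrix.vecMulVec_apply, dotProduct, Finset.mul_sum,
    Finset.sum_mul]
  refine Finset.sum_congr rfl fun i _ => ?_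
  refine Finset.sum_congr rfl fun j _ => by ring

lemma posSemidef_vecMulVec_self {n : Type*} [Fintype n] (v : n → ℝ) :
    (Matrix.vecMulVec v v).PosSemidef := by
  rw [Matrix.posSemidef_iff_dotProduct_mulVec]
  constructor
  · ext i j
    simp [Matrix.conjTranspose_apply, Matrix.vecMulVec_apply, mul_comm]
  · intro x
    have hd := dot_vecMulVec v x
    simp only [star_trivial]
    rw [hd]
    exact sq_nonneg _

lemma eval_Xe {s : ℕ} (z : Fin s → ℝ) (t : Fin (s + 1)) :
    MvPolynomial.eval z (Xe t) = extv z t := by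
  rcases Fin.eq_zero_or_eq_succ t with rfl | ⟨e, rfl⟩ <;> simp [Xe, extv]

lemma memb {s : ℕ} (c : Fin s → ℝ) (K : ℕ) (h : Fin K → MvPolynomial (Fin s) ℝ)
    (hlam : ∀ i : Fin s, ∃ lam : Fin K → MvPolynomial (Fin s) ℝ,
        (∀ k, (lam k).totalDegree ≤ 1) ∧
        MvPolynomial.X i - MvPolynomial.C (c i) = ∑ k, lam k * h k)
    (i j : Fin (s + 1)) (hij : i ≤ j) (hne : ¬(i = 0 ∧ j = 0)) :
    ∃ g : Fin K → MvPolynomial (Fin s) ℝ, (∀ k, (g k).totalDegree ≤ 2) ∧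
      Xe i * Xe j - MvPolynomial.C (ce c i * ce c j) = ∑ k, g k * h k := by
  rcases Fin.eq_zero_or_eq_succ i with rfl | ⟨e, rfl⟩
  · rcases Fin.eq_zero_or_eq_succ j with rfl | ⟨f, rfl⟩
    · exact absurd ⟨rfl, rfl⟩ hne
    · obtain ⟨lam, hdeg, heq⟩ := hlam f
      refine ⟨lam, fun k => (hdeg k).trans one_le_two, ?_⟩
      simpa [Xe, ce] using heq
  · rcases Fin.eq_zero_or_eq_succ j with rfl | ⟨f, rfl⟩
    · exact absurd hij (by simp [Fin.le_def])
    · obtain ⟨lame, hdege, heqe⟩ := hlam e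
      obtain ⟨lamf, hdegf, heqf⟩ := hlam f
      refine ⟨fun k => MvPolynomial.X f * lame k + MvPolynomial.C (c e) * lamf k, ?_, ?_⟩
      · intro k
        have h1 : (MvPolynomial.X f * lame k).totalDegree ≤ 2 := by
          refine (MvPolynomial.totalDegree_mul _ _).trans ?_
          have := hdege k
          rw [MvPolynomial.totalDegree_X]
          omega
        have h2 : (MvPolynomial.C (c e) * lamf k).totalDegree ≤ 2 := by
          refine (MvPolynomial.totalDegree_mul _ _).trans ?_
          have := hdegf k
          rw [MvPolynomial.totalDegree_C]
          omega
        exact (MvPolynomial.totalDegree_add _ _).trans (max_le h1 h2)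
      · have hsum : (∑ k, (MvPolynomial.X f * lame k + MvPolynomial.C (c e) * lamf k) * h k)
            = MvPolynomial.X f * (∑ k, lame k * h k)
              + MvPolynomial.C (c e) * (∑ k, lamf k * h k) := by
          rw [Finset.mul_sum, Finset.mul_sum, ← Finset.sum_add_distrib]
          exact Finset.sum_congr rfl fun k _ => by ring
        rw [hsum, ← heqe, ← heqf]
        simp only [Xe, ce, Fin.cons_succ, MvPolynomial.C_mul]
        ring


/-- under the hypotheses of STATEMENT 10, for every `r ∈ {2,…,N}` there
exist a PSD matrix `Q^r` with `[Q^r]ᵣᵣ = 1`, vanishing outside the rows/columns `{1, r}`,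
and a PSD matrix `U^r` such that
`u₂(z)ᵀ Q^r u₂(z) = (h(z) ⊗ u₂(z))ᵀ U^r (h(z) ⊗ u₂(z))` for all `z`. -/
theorem stmt15 (s : ℕ) (hs : 1 ≤ s) (c : Fin s → ℝ) (hc : ∀ i, c i ≠ 0)
    (K : ℕ) (h : Fin K → MvPolynomial (Fin s) ℝ) (a b : Fin K → Fin (s + 1))
    (hform : ∀ k, h k = Xe (a k) * Xe (b k) - MvPolynomial.C (ce c (a k) * ce c (b k)))
    (hlam : ∀ i : Fin s, ∃ lam : Fin K → MvPolynomial (Fin s) ℝ,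
        (∀ k, (lam k).totalDegree ≤ 1) ∧
        MvPolynomial.X i - MvPolynomial.C (c i) = ∑ k, lam k * h k) :
    ∀ r : MonIdx s, r ≠ idx1 s →
      ∃ Q : Matrix (MonIdx s) (MonIdx s) ℝ, Q.PosSemidef ∧ Q r r = 1 ∧
        (∀ p q : MonIdx s, (p ≠ idx1 s ∧ p ≠ r) ∨ (q ≠ idx1 s ∧ q ≠ r) → Q p q = 0) ∧
        ∃ U : Matrix (Fin K × MonIdx s) (Fin K × MonIdx s) ℝ, U.PosSemidef ∧
          ∀ z : Fin s → ℝ,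
            u2 z ⬝ᵥ (Q *ᵥ u2 z) =
              kron (fun k => MvPolynomial.eval z (h k)) (u2 z) ⬝ᵥ
                (U *ᵥ kron (fun k => MvPolynomial.eval z (h k)) (u2 z)) := by
  intro r hr
  obtain ⟨⟨i, j⟩, hij⟩ := r
  set r : MonIdx s := ⟨(i, j), hij⟩ with hrdef
  have hne : ¬(i = 0 ∧ j = 0) := by
    rintro ⟨rfl, rfl⟩
    exact hr rfl
  obtain ⟨g, hgdeg, hgeq⟩ := memb c K h hlam i j hij hne
  choose w hw using fun k => rep_poly (g k) (hgdeg k)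
  set v : MonIdx s → ℝ :=
    fun t => (if t = r then (1 : ℝ) else 0) + (if t = idx1 s then -(u2 c r) else 0) with hv
  have hv0 : ∀ p : MonIdx s, p ≠ idx1 s → p ≠ r → v p = 0 := by
    intro p h1 h2; simp [hv, h1, h2]
  refine ⟨Matrix.vecMulVec v v, posSemidef_vecMulVec_self v, ?_, ?_, ?_⟩
  · simp [Matrix.vecMulVec_apply, hv, hr]
  · intro p q hpq
    rcases hpq with ⟨h1, h2⟩ | ⟨h1, h2⟩ <;>
      simp [Matrix.vecMulVec_apply, hv0 _ h1 h2]
  · set wv : Fin K × MonIdx s → ℝ := fun p => w p.1 p.2 with hwv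
    refine ⟨Matrix.vecMulVec wv wv, posSemidef_vecMulVec_self wv, ?_⟩
    intro z
    have hone : u2 z (idx1 s) = 1 := by simp [u2, idx1, extv]
    have hsumv : ∑ t, v t * u2 z t = u2 z r - u2 c r := by
      simp [hv, add_mul, Finset.sum_add_distrib, ite_mul, hone]
      ring
    have hpoly : u2 z r - u2 c r
        = MvPolynomial.eval z (Xe i * Xe j - MvPolynomial.C (ce c i * ce c j)) := by
      simp [u2, eval_Xe, hrdef]
      rfl
    have hR : ∑ p : Fin K × MonIdx s,
        wv p * kron (fun k => MvPolynomial.eval z (h k)) (u2 z) p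
        = ∑ k, MvPolynomial.eval z (h k) * MvPolynomial.eval z (g k) := by
      rw [Fintype.sum_prod_type]
      refine Finset.sum_congr rfl fun k _ => ?_
      have hwk : MvPolynomial.eval z (g k) = ∑ t, w k t * u2 z t := hw k z
      rw [hwk, Finset.mul_sum]
      refine Finset.sum_congr rfl fun t _ => ?_
      simp [kron, hwv]
      ring
    rw [dot_vecMulVec, dot_vecMulVec, hsumv, hR, hpoly, hgeq]
    rw [map_sum]
    congr 1
    refine Finset.sum_congr rfl fun k _ => ?_
    rw [_root_.map_mul]
    ring
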